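/- Let X, Y, α, β be finite nonempty index types and let dA, dB ≥ 1. For each x ∈ X and a ∈ α let A_{a|x} be a dA×dA positive semidefinite complex matrix with ∑_a A_{a|x} = I_{dA}. For each y ∈ Y and b ∈ β let |ψ_{b|y}⟩ be a unit vector in ℂ^{dB} with target projection P_{b|y} = |ψ_{b|y}⟩⟨ψ_{b|y}|, and let B_{b|y} be a dB×dB positive semidefinite matrix with trace 1 (a lab measurement operator) satisfying Tr(B_{b|y} P_{b|y}) ≥ 1 − ε_{b,y}, where ε_{b,y} ≥ 0. Let c_{a,b,x,y} ≥ 0 be real coefficients, let ρ be a (dA·dB)×(dA·dB) density matrix on the tensor product space, and suppose the target-measurement value satisfies ∑_{a,b,x,y} c_{a,b,x,y} · Tr((A_{a|x} ⊗ P_{b|y}) ρ) ≤ β₀. Then for every real μ ≥ −1: ∑_{a,b,x,y} c_{a,b,x,y} · Tr((A_{a|x} ⊗ B_{b|y}) ρ) ≤ (1+μ)·β₀ + (1/2)·∑_{x ∈ X} max_{a ∈ α} [ ∑_{b,y} c_{a,b,x,y} · ( √(μ² + 4 ε_{b,y} (1+μ)) − μ ) ]. -/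

import Mathlib

open Matrix ComplexOrder Kronecker

set_option maxHeartbeats 1000000
set_option linter.unusedSectionVars false

noncomputable section
namespace CSB
variable {n m : Type*} [Fintype n] [Fintype m]


variable {n m : Type*} [Fintype n] [Fintype m]

/-- squared ℓ² norm of a complex vector -/
def n2 (u : n → ℂ) : ℝ := ∑ i, Complex.normSq (u i)

lemma n2_nonneg (u : n → ℂ) : 0 ≤ n2 u :=
  Finset.sum_nonneg fun _ _ => Complex.normSq_nonneg _

lemma star_dot_self (u : n → ℂ) : star u ⬝ᵥ u = (n2 u : ℂ) := by
  simp [dotProduct, n2, Complex.normSq_eq_conj_mul_self]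

lemma trace_conj_mul_re_nonneg (E : Matrix m n ℂ) : 0 ≤ ((Eᴴ * E).trace).re := by
  have h : (Eᴴ * E).trace = ∑ i, ∑ j, ((starRingEnd ℂ) (E j i) * E j i) := by
    simp [Matrix.trace, Matrix.mul_apply, Matrix.conjTranspose_apply, Matrix.diag]
  rw [h]
  rw [Complex.re_sum]
  refine Finset.sum_nonneg fun i _ => ?_
  rw [Complex.re_sum]
  refine Finset.sum_nonneg fun j _ => ?_
  rw [← Complex.normSq_eq_conj_mul_self]
  simp [Complex.normSq_nonneg]

open scoped MatrixOrder in
lemma psd_eq {M : Matrix n n ℂ} (hM : M.PosSemidef) : ∃ C : Matrix n n ℂ, M = Cᴴ * C := by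
  classical
  obtain ⟨C, hC⟩ := CStarAlgebra.nonneg_iff_eq_star_mul_self.mp hM.nonneg
  exact ⟨C, hC⟩

lemma trace_mul_psd_re_nonneg {M N : Matrix n n ℂ} (hM : M.PosSemidef) (hN : N.PosSemidef) :
    0 ≤ ((M * N).trace).re := by
  obtain ⟨C, hC⟩ := CSB.psd_eq hM
  obtain ⟨D, hD⟩ := CSB.psd_eq hN
  have : M * N = Cᴴ * ((C * Dᴴ) * D) := by rw [hC, hD]; noncomm_ring
  rw [this, Matrix.trace_mul_comm]
  have h2 : (C * Dᴴ * D) * Cᴴ = (D * Cᴴ)ᴴ * (D * Cᴴ) := by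
    simp only [Matrix.conjTranspose_mul, Matrix.conjTranspose_conjTranspose, Matrix.mul_assoc]
  rw [h2]
  exact trace_conj_mul_re_nonneg (D * Cᴴ)

lemma conjTranspose_kronecker (A : Matrix m m ℂ) (B : Matrix n n ℂ) :
    (A ⊗ₖ B)ᴴ = Aᴴ ⊗ₖ Bᴴ := by
  ext ⟨i₁, i₂⟩ ⟨j₁, j₂⟩
  simp [Matrix.conjTranspose_apply, mul_comm]

lemma PosSemidef.kron {A : Matrix m m ℂ} {B : Matrix n n ℂ}
    (hA : A.PosSemidef) (hB : B.PosSemidef) : (A ⊗ₖ B).PosSemidef := by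
  obtain ⟨C, hC⟩ := CSB.psd_eq hA
  obtain ⟨D, hD⟩ := CSB.psd_eq hB
  rw [hC, hD, Matrix.mul_kronecker_mul, ← conjTranspose_kronecker]
  exact Matrix.posSemidef_conjTranspose_mul_self _

def toE (u : n → ℂ) : EuclideanSpace ℂ n := (WithLp.equiv 2 _).symm u

lemma n2_eq (u : n → ℂ) : n2 u = ‖toE u‖ ^ 2 := by
  rw [EuclideanSpace.norm_eq, Real.sq_sqrt (by positivity)]
  simp [n2, toE, Complex.normSq_eq_norm_sq]

lemma norm_toE (u : n → ℂ) : ‖toE u‖ = Real.sqrt (n2 u) := by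
  rw [n2_eq]; exact (Real.sqrt_sq (norm_nonneg _)).symm

/-- Cauchy–Schwarz for complex sums. -/
lemma cs_sum (a b : n → ℂ) : Complex.normSq (∑ j, a j * b j)
    ≤ (∑ j, Complex.normSq (a j)) * (∑ j, Complex.normSq (b j)) := by
  have h := norm_inner_le_norm (𝕜 := ℂ) (toE (star a)) (toE b)
  have hi : (inner ℂ (toE (star a)) (toE b) : ℂ) = ∑ j, a j * b j := by
    change b ⬝ᵥ star (star a) = _
    simp [dotProduct, mul_comm]
  rw [hi] at h
  have := mul_self_le_mul_self (norm_nonneg (∑ j, a j * b j)) h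
  calc Complex.normSq (∑ j, a j * b j) = ‖∑ j, a j * b j‖ * ‖∑ j, a j * b j‖ := by
        rw [Complex.norm_mul_self_eq_normSq]
    _ ≤ (‖toE (star a)‖ * ‖toE b‖) * (‖toE (star a)‖ * ‖toE b‖) := this
    _ = (‖toE (star a)‖^2) * (‖toE b‖^2) := by ring
    _ = (∑ j, Complex.normSq (a j)) * (∑ j, Complex.normSq (b j)) := by
        rw [← n2_eq, ← n2_eq]
        simp [n2]

/-- quadratic form dominated by trace for PSD matrices -/
lemma quad_le_trace {C : Matrix n n ℂ} (hC : C.PosSemidef) (u : n → ℂ) :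
    (star u ⬝ᵥ C *ᵥ u).re ≤ (C.trace).re * n2 u := by
  obtain ⟨E, hE⟩ := CSB.psd_eq hC
  subst hE
  have key : star u ⬝ᵥ (Eᴴ * E) *ᵥ u = star (E *ᵥ u) ⬝ᵥ (E *ᵥ u) := by
    rw [← Matrix.mulVec_mulVec, Matrix.dotProduct_mulVec, ← Matrix.star_mulVec]
  rw [key]
  have h1 : (star (E *ᵥ u) ⬝ᵥ (E *ᵥ u)).re = ∑ i, Complex.normSq ((E *ᵥ u) i) := by
    simp [dotProduct, Complex.re_sum, Complex.normSq_apply, Complex.mul_re]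
  have h2 : ((Eᴴ * E).trace).re = ∑ i, ∑ j, Complex.normSq (E i j) := by
    simp only [Matrix.trace, Matrix.diag, Matrix.mul_apply, Matrix.conjTranspose_apply,
      Complex.re_sum]
    rw [Finset.sum_comm]
    simp [Complex.normSq_apply, Complex.mul_re]
  rw [h1, h2]
  have hpt : ∀ i, Complex.normSq ((E *ᵥ u) i) ≤ (∑ j, Complex.normSq (E i j)) * n2 u := by
    intro i
    simpa [Matrix.mulVec, dotProduct, n2] using cs_sum (fun j => E i j) u
  calc ∑ i, Complex.normSq ((E *ᵥ u) i) ≤ ∑ i, (∑ j, Complex.normSq (E i j)) * n2 u :=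
        Finset.sum_le_sum fun i _ => hpt i
    _ = (∑ i, ∑ j, Complex.normSq (E i j)) * n2 u := by rw [Finset.sum_mul]



/-- amgm: 2√(a b κ s) ≤ aκ + bs for nonneg reals -/
lemma amgm {a b κ s : ℝ} (ha : 0 ≤ a) (hb : 0 ≤ b) (hκ : 0 ≤ κ) (hs : 0 ≤ s) :
    2 * Real.sqrt (a * b * κ * s) ≤ a * κ + b * s := by
  have h1 : Real.sqrt (a * b * κ * s) = Real.sqrt (a * κ) * Real.sqrt (b * s) := by
    rw [← Real.sqrt_mul (by positivity)]
    ring_nf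
  rw [h1]
  nlinarith [sq_nonneg (Real.sqrt (a*κ) - Real.sqrt (b*s)),
    Real.sq_sqrt (mul_nonneg ha hκ), Real.sq_sqrt (mul_nonneg hb hs),
    Real.sqrt_nonneg (a*κ), Real.sqrt_nonneg (b*s)]

lemma scalar_key (κ s p r ε μ : ℝ) (hκ : 0 ≤ κ) (hs : 0 ≤ s) (hr : 0 ≤ r)
    (hp0 : 0 ≤ p) (hp1 : p ≤ 1) (hpε : 1 - ε ≤ p) (hrs : r ≤ (1 - p) * s)
    (hμ : -1 ≤ μ) (hε : 0 ≤ ε) :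
    (Real.sqrt κ * Real.sqrt p + Real.sqrt r) ^ 2 ≤
      (1 + μ) * κ + ((Real.sqrt (μ ^ 2 + 4 * ε * (1 + μ)) - μ) / 2) * (κ + s) := by
  set η : ℝ := 1 - p with hηdef
  have hη0 : 0 ≤ η := by linarith
  have hη1 : η ≤ 1 := by linarith
  have hηε : η ≤ ε := by linarith
  have h1μ : 0 ≤ 1 + μ := by linarith
  set S : ℝ := Real.sqrt (μ ^ 2 + 4 * ε * (1 + μ)) with hSdef
  have hS0 : 0 ≤ S := Real.sqrt_nonneg _
  have hS2 : S ^ 2 = μ ^ 2 + 4 * ε * (1 + μ) := Real.sq_sqrt (by positivity)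
  set t : ℝ := (S - μ) / 2 with htdef
  have hSabs : |μ| ≤ S := by
    rw [← Real.sqrt_sq_eq_abs]
    exact Real.sqrt_le_sqrt (by nlinarith)
  have ht0 : 0 ≤ t := by
    have := abs_le.mp (le_refl |μ|) |>.2
    have : μ ≤ S := le_trans (le_abs_self μ) hSabs
    simp only [htdef]; linarith
  have htμ : 0 ≤ t + μ := by
    have : -μ ≤ S := le_trans (neg_le_abs μ) hSabs
    simp only [htdef]; linarith
  have htq : t * (t + μ) = ε * (1 + μ) := by
    simp only [htdef]; nlinarith [hS2]
  -- η ≤ t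
  have hηt : η ≤ t := by
    rcases le_or_gt (2 * η + μ) 0 with h | h
    · simp only [htdef]; linarith
    · have hsq : (2 * η + μ) ^ 2 ≤ S ^ 2 := by
        rw [hS2]
        nlinarith [mul_nonneg (by linarith : (0:ℝ) ≤ ε - η) h1μ,
          mul_nonneg hη0 (by linarith : (0:ℝ) ≤ 1 - η)]
      have : 2 * η + μ ≤ S := by nlinarith
      simp only [htdef]; linarith
  have ha : 0 ≤ t + μ + η := by linarith
  have hb : 0 ≤ t - η := by linarith
  have hab : η * p ≤ (t + μ + η) * (t - η) := by nlinarith [htq]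
  -- expand LHS
  have hκ' := Real.sq_sqrt hκ
  have hp' := Real.sq_sqrt hp0
  have hr' := Real.sq_sqrt hr
  have hcross : Real.sqrt κ * Real.sqrt p * Real.sqrt r ≤ Real.sqrt ((t+μ+η) * (t-η) * κ * s) := by
    have e1 : Real.sqrt κ * Real.sqrt p * Real.sqrt r = Real.sqrt (κ * p * r) := by
      rw [Real.sqrt_mul (by positivity), Real.sqrt_mul hκ]
    rw [e1]
    apply Real.sqrt_le_sqrt
    calc κ * p * r ≤ κ * p * (η * s) := by
          apply mul_le_mul_of_nonneg_left _ (by positivity)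
          simpa [hηdef] using hrs
      _ ≤ (t+μ+η) * (t-η) * κ * s := by nlinarith [hab, mul_nonneg hκ hs]
  have hAM := amgm ha hb hκ hs
  have hrηs : r ≤ η * s := by simpa [hηdef] using hrs
  have hexp : (Real.sqrt κ * Real.sqrt p + Real.sqrt r) ^ 2
      = κ * p + 2 * (Real.sqrt κ * Real.sqrt p * Real.sqrt r) + r := by
    have e : (Real.sqrt κ * Real.sqrt p + Real.sqrt r) ^ 2
        = (Real.sqrt κ)^2 * (Real.sqrt p)^2 + 2 * (Real.sqrt κ * Real.sqrt p * Real.sqrt r)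
          + (Real.sqrt r)^2 := by ring
    rw [e, hκ', hp', hr']
  rw [hexp]
  have : κ * p + 2 * Real.sqrt ((t+μ+η)*(t-η)*κ*s) + η * s ≤ (1+μ) * κ + t * (κ + s) := by
    have h2 : 2 * Real.sqrt ((t+μ+η)*(t-η)*κ*s) ≤ (t+μ+η)*κ + (t-η)*s := hAM
    nlinarith [mul_le_mul_of_nonneg_right hp1 hκ]
  have hmono : κ * p + 2 * (Real.sqrt κ * Real.sqrt p * Real.sqrt r) + r
      ≤ κ * p + 2 * Real.sqrt ((t+μ+η)*(t-η)*κ*s) + η * s := by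
    linarith [hcross, hrηs]
  calc κ * p + 2 * (Real.sqrt κ * Real.sqrt p * Real.sqrt r) + r
      ≤ κ * p + 2 * Real.sqrt ((t+μ+η)*(t-η)*κ*s) + η * s := hmono
    _ ≤ (1+μ) * κ + t * (κ + s) := this

lemma vecMulVec_mulVec (x y v : n → ℂ) : (vecMulVec x y) *ᵥ v = (y ⬝ᵥ v) • x := by
  ext i
  simp [Matrix.mulVec, vecMulVec_apply, dotProduct, Finset.mul_sum, mul_assoc, mul_comm, mul_left_comm]

lemma star_dot_comm (x v : n → ℂ) : star v ⬝ᵥ x = (starRingEnd ℂ) (star x ⬝ᵥ v) := by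
  simp [dotProduct, map_sum, mul_comm]

lemma trace_mul_vecMulVec (B : Matrix n n ℂ) (ψ : n → ℂ) :
    (B * vecMulVec ψ (star ψ)).trace = star ψ ⬝ᵥ (B *ᵥ ψ) := by
  simp only [Matrix.trace, Matrix.diag, Matrix.mul_apply, vecMulVec_apply, Matrix.mulVec,
    dotProduct, Finset.mul_sum, Pi.star_apply]
  apply Finset.sum_congr rfl; intro i _
  apply Finset.sum_congr rfl; intro j _
  ring


section OpBound
open scoped MatrixOrder
variable {n : Type*} [Fintype n] [DecidableEq n]

lemma quad_eq_n2 {B : Matrix n n ℂ} (hB : B.PosSemidef) (u : n → ℂ) :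
    star u ⬝ᵥ (B *ᵥ u) = (n2 (CFC.sqrt B *ᵥ u) : ℂ) := by
  set D := CFC.sqrt B with hDdef
  have hDh : Dᴴ = D := (CFC.sqrt_nonneg B).posSemidef.isHermitian
  have hDD : D * D = B := CFC.sqrt_mul_sqrt_self B hB.nonneg
  calc star u ⬝ᵥ (B *ᵥ u) = star u ⬝ᵥ ((Dᴴ * D) *ᵥ u) := by rw [hDh, hDD]
    _ = star (D *ᵥ u) ⬝ᵥ (D *ᵥ u) := by
        rw [← Matrix.mulVec_mulVec, Matrix.dotProduct_mulVec, ← Matrix.star_mulVec]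
    _ = (n2 (D *ᵥ u) : ℂ) := star_dot_self _

lemma op_bound {ψ : n → ℂ} (hψ : star ψ ⬝ᵥ ψ = 1)
    {B : Matrix n n ℂ} (hB : B.PosSemidef) (hBtr : B.trace = 1)
    {ε μ : ℝ} (hε : 0 ≤ ε) (hμ : -1 ≤ μ)
    (hfid : 1 - ε ≤ ((B * vecMulVec ψ (star ψ)).trace).re) :
    (((1 + μ : ℝ) : ℂ) • vecMulVec ψ (star ψ)
      + (((Real.sqrt (μ ^ 2 + 4 * ε * (1 + μ)) - μ) / 2 : ℝ) : ℂ) • (1 : Matrix n n ℂ)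
      - B).PosSemidef := by
  set t : ℝ := (Real.sqrt (μ ^ 2 + 4 * ε * (1 + μ)) - μ) / 2 with htdef
  clear_value t
  set P : Matrix n n ℂ := vecMulVec ψ (star ψ) with hPdef
  have hPherm : Pᴴ = P := by
    ext i j
    simp [hPdef, Matrix.conjTranspose_apply, vecMulVec_apply, mul_comm]
  have hn2ψ : n2 ψ = 1 := by
    have := star_dot_self ψ
    rw [hψ] at this
    exact_mod_cast this.symm
  have hPP : P * P = P := by
    ext i j
    simp only [hPdef, Matrix.mul_apply, vecMulVec_apply, Pi.star_apply]
    calc ∑ k, ψ i * star (ψ k) * (ψ k * star (ψ j))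
        = (ψ i * star (ψ j)) * ∑ k, star (ψ k) * ψ k := by
          rw [Finset.mul_sum]; apply Finset.sum_congr rfl; intros; ring
      _ = ψ i * star (ψ j) := by rw [show (∑ k, star (ψ k) * ψ k) = star ψ ⬝ᵥ ψ from rfl, hψ, mul_one]
  -- 1 - P is PSD
  have hOneSubP : (1 - P).PosSemidef := by
    refine Matrix.PosSemidef.of_dotProduct_mulVec_nonneg ?_ ?_
    · show (1 - P)ᴴ = 1 - P
      rw [Matrix.conjTranspose_sub, hPherm, Matrix.conjTranspose_one]
    · intro u
      have hPu : P *ᵥ u = (star ψ ⬝ᵥ u) • ψ := by rw [hPdef, vecMulVec_mulVec]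
      have hvPu : star u ⬝ᵥ (P *ᵥ u) = ((Complex.normSq (star ψ ⬝ᵥ u) : ℝ) : ℂ) := by
        rw [hPu, dotProduct_smul, star_dot_comm ψ u, smul_eq_mul]
        exact Complex.mul_conj _
      have : star u ⬝ᵥ ((1 - P) *ᵥ u) = ((n2 u - Complex.normSq (star ψ ⬝ᵥ u) : ℝ) : ℂ) := by
        rw [Matrix.sub_mulVec, dotProduct_sub, Matrix.one_mulVec, star_dot_self, hvPu]
        push_cast; ring
      rw [this]
      rw [Complex.zero_le_real]
      have hcs : Complex.normSq (star ψ ⬝ᵥ u) ≤ n2 ψ * n2 u := by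
        have := cs_sum (star ψ) u
        simpa [dotProduct, n2, Complex.normSq_conj] using this
      rw [hn2ψ, one_mul] at hcs
      linarith
  -- fidelity in terms of p
  set D := CFC.sqrt B with hDdef
  refine Matrix.PosSemidef.of_dotProduct_mulVec_nonneg ?_ ?_
  · show _ᴴ = _
    rw [Matrix.conjTranspose_sub, Matrix.conjTranspose_add, Matrix.conjTranspose_smul,
      Matrix.conjTranspose_smul, hPherm, Matrix.conjTranspose_one, hB.isHermitian.eq]
    simp [Complex.star_def, Complex.conj_ofReal]
  · intro v
    set c : ℂ := star ψ ⬝ᵥ v with hcdef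
    set w : (n → ℂ) := v - c • ψ with hwdef
    have hψw : star ψ ⬝ᵥ w = 0 := by
      rw [hwdef, dotProduct_sub, dotProduct_smul, hψ, smul_eq_mul, mul_one, sub_self]
    have hwψ : star w ⬝ᵥ ψ = 0 := by
      rw [star_dot_comm ψ w, hψw, map_zero]
    have hv : v = c • ψ + w := by rw [hwdef]; ring_nf
    set κ : ℝ := Complex.normSq c with hκdef
    set s : ℝ := n2 w with hsdef
    set p : ℝ := n2 (D *ᵥ ψ) with hpdef
    set r : ℝ := n2 (D *ᵥ w) with hrdef
    set q : ℝ := n2 (D *ᵥ v) with hqdef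
    -- fidelity: 1 - ε ≤ p
    have hBψ : star ψ ⬝ᵥ (B *ᵥ ψ) = (p : ℂ) := quad_eq_n2 hB ψ
    have htr : (B * P).trace = (p : ℂ) := by rw [hPdef, trace_mul_vecMulVec, hBψ]
    have hp1ε : 1 - ε ≤ p := by
      rw [htr] at hfid
      simpa using hfid
    -- p ≤ 1
    have hp1 : p ≤ 1 := by
      have h0 : 0 ≤ ((B * (1 - P)).trace).re := trace_mul_psd_re_nonneg hB hOneSubP
      have : (B * (1 - P)).trace = 1 - (p : ℂ) := by
        rw [Matrix.mul_sub, Matrix.trace_sub, Matrix.mul_one, hBtr, htr]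
      rw [this] at h0
      simp only [Complex.sub_re, Complex.one_re, Complex.ofReal_re] at h0
      linarith
    have hp0 : 0 ≤ p := n2_nonneg _
    -- r ≤ (1 - p) * s
    have hrs : r ≤ (1 - p) * s := by
      set C : Matrix n n ℂ := (1 - P) * B * (1 - P) with hCdef
      have hC : C.PosSemidef := by
        have := hB.conjTranspose_mul_mul_same (1 - P)
        rwa [show (1 - P)ᴴ = 1 - P from hOneSubP.isHermitian] at this
      have hPw : (1 - P) *ᵥ w = w := by
        rw [Matrix.sub_mulVec, Matrix.one_mulVec, hPdef, vecMulVec_mulVec, hψw, zero_smul,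
          sub_zero]
      have hCw : star w ⬝ᵥ (C *ᵥ w) = star w ⬝ᵥ (B *ᵥ w) := by
        have e1 : C *ᵥ w = (1 - P) *ᵥ (B *ᵥ w) := by
          rw [hCdef, ← Matrix.mulVec_mulVec, ← Matrix.mulVec_mulVec, hPw]
        rw [e1, Matrix.sub_mulVec, Matrix.one_mulVec, dotProduct_sub, hPdef,
          vecMulVec_mulVec, dotProduct_smul, hwψ, smul_eq_mul, mul_zero, sub_zero]
      have hQQ : (1 - P) * (1 - P) = (1 - P) := by
        rw [Matrix.sub_mul, Matrix.one_mul, Matrix.mul_sub, Matrix.mul_one, hPP, sub_self,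
          sub_zero]
      have htrC : (C.trace).re = 1 - p := by
        have e2 : C.trace = 1 - (p : ℂ) := by
          rw [hCdef, Matrix.trace_mul_cycle, hQQ, Matrix.sub_mul, Matrix.one_mul,
            Matrix.trace_sub, Matrix.trace_mul_comm, htr, hBtr]
        rw [e2]
        simp
      have hq := quad_le_trace hC w
      rw [hCw, quad_eq_n2 hB w] at hq
      simp only [Complex.ofReal_re] at hq
      rw [htrC] at hq
      exact hq
    -- Pythagoras : n2 v = κ + s
    have hpyth : n2 v = κ + s := by
      have e : star v ⬝ᵥ v = ((κ + s : ℝ) : ℂ) := by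
        conv_lhs => rw [hv]
        simp only [star_add, star_smul, add_dotProduct, smul_dotProduct, dotProduct_add,
          dotProduct_smul, hψ, hψw, hwψ, star_dot_self w, smul_eq_mul, mul_one, mul_zero,
          add_zero, zero_add, RCLike.star_def]
        rw [Complex.mul_conj]
        push_cast
        rw [hκdef, hsdef]
      have e2 := star_dot_self v
      rw [e2] at e
      exact_mod_cast e
    -- q bound
    have hqbound : q ≤ (Real.sqrt κ * Real.sqrt p + Real.sqrt r) ^ 2 := by
      have hDv : D *ᵥ v = c • (D *ᵥ ψ) + D *ᵥ w := by
        conv_lhs => rw [hv]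
        rw [Matrix.mulVec_add, Matrix.mulVec_smul]
      have hnorm : Real.sqrt q ≤ Real.sqrt κ * Real.sqrt p + Real.sqrt r := by
        have e1 : Real.sqrt q = ‖toE (D *ᵥ v)‖ := (norm_toE _).symm
        have e2 : toE (D *ᵥ v) = c • toE (D *ᵥ ψ) + toE (D *ᵥ w) := by
          rw [hDv]; rfl
        rw [e1, e2]
        calc ‖c • toE (D *ᵥ ψ) + toE (D *ᵥ w)‖
            ≤ ‖c • toE (D *ᵥ ψ)‖ + ‖toE (D *ᵥ w)‖ := norm_add_le _ _
          _ = ‖c‖ * ‖toE (D *ᵥ ψ)‖ + ‖toE (D *ᵥ w)‖ := by rw [norm_smul]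
          _ = Real.sqrt κ * Real.sqrt p + Real.sqrt r := by
              rw [norm_toE, norm_toE, hκdef, Complex.norm_def]
      calc q = (Real.sqrt q) ^ 2 := (Real.sq_sqrt (n2_nonneg _)).symm
        _ ≤ (Real.sqrt κ * Real.sqrt p + Real.sqrt r) ^ 2 := by
            apply pow_le_pow_left₀ (Real.sqrt_nonneg _) hnorm
    -- scalar key
    have hkey := scalar_key κ s p r ε μ (Complex.normSq_nonneg _) (n2_nonneg _)
      (n2_nonneg _) hp0 hp1 hp1ε hrs hμ hε
    rw [← htdef] at hkey
    have hfinal : q ≤ (1 + μ) * κ + t * n2 v := by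
      rw [hpyth]
      calc q ≤ (Real.sqrt κ * Real.sqrt p + Real.sqrt r) ^ 2 := hqbound
        _ ≤ (1 + μ) * κ + t * (κ + s) := hkey
    -- assemble
    have hvPv : star v ⬝ᵥ (P *ᵥ v) = (κ : ℂ) := by
      rw [hPdef, vecMulVec_mulVec, dotProduct_smul, star_dot_comm ψ v, ← hcdef,
        smul_eq_mul]
      exact Complex.mul_conj c
    have hexpand : star v ⬝ᵥ ((((1 + μ : ℝ) : ℂ) • P + ((t : ℝ) : ℂ) • (1 : Matrix n n ℂ) - B) *ᵥ v)
        = (((1 + μ) * κ + t * n2 v - q : ℝ) : ℂ) := by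
      rw [Matrix.sub_mulVec, Matrix.add_mulVec, Matrix.smul_mulVec,
        Matrix.smul_mulVec, Matrix.one_mulVec, dotProduct_sub, dotProduct_add,
        dotProduct_smul, dotProduct_smul, hvPv, star_dot_self, quad_eq_n2 hB, ← hqdef]
      simp only [smul_eq_mul]
      push_cast
      ring
    rw [hexpand]
    rw [Complex.zero_le_real]
    linarith [hfinal]

end OpBound

end CSB



/-- Main result: corrected steering bound under imprecise measurements for the
trusted party.  If the target value of the steering functional is at most `β₀`,
then for any lab measurement operators `B_{b|y}` (PSD, trace one) that are
`ε_{b,y}`-close in fidelity to the rank-one target projections `P_{b|y}`,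
the lab value is bounded by
`(1+μ)β₀ + ½ ∑_x max_a ∑_{b,y} c_{abxy} (√(μ²+4ε_{b,y}(1+μ)) − μ)` for every `μ ≥ −1`. -/
theorem corrected_steering_bound
    {X Y α β : Type*} [Fintype X] [Fintype Y] [Fintype α] [Fintype β]
    [Nonempty X] [Nonempty Y] [Nonempty α] [Nonempty β]
    (dA dB : ℕ) (hdA : 1 ≤ dA) (hdB : 1 ≤ dB)
    (A : X → α → Matrix (Fin dA) (Fin dA) ℂ)
    (hApos : ∀ x a, (A x a).PosSemidef)
    (hAsum : ∀ x, ∑ a, A x a = 1)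
    (ψ : Y → β → Fin dB → ℂ)
    (hψ : ∀ y b, star (ψ y b) ⬝ᵥ ψ y b = 1)
    (B : Y → β → Matrix (Fin dB) (Fin dB) ℂ)
    (hBpos : ∀ y b, (B y b).PosSemidef)
    (hBtr : ∀ y b, (B y b).trace = 1)
    (ε : β → Y → ℝ) (hε : ∀ b y, 0 ≤ ε b y)
    (hfid : ∀ y b, 1 - ε b y ≤ ((B y b * vecMulVec (ψ y b) (star (ψ y b))).trace).re)
    (c : α → β → X → Y → ℝ) (hc : ∀ a b x y, 0 ≤ c a b x y)
    (ρ : Matrix (Fin dA × Fin dB) (Fin dA × Fin dB) ℂ)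
    (hρ : ρ.PosSemidef) (hρtr : ρ.trace = 1)
    (β₀ : ℝ)
    (htarget : ∑ a, ∑ b, ∑ x, ∑ y, c a b x y *
        (((A x a ⊗ₖ vecMulVec (ψ y b) (star (ψ y b))) * ρ).trace).re ≤ β₀)
    (μ : ℝ) (hμ : -1 ≤ μ) :
    ∑ a, ∑ b, ∑ x, ∑ y, c a b x y * (((A x a ⊗ₖ B y b) * ρ).trace).re ≤
      (1 + μ) * β₀ + (1 / 2) * ∑ x, Finset.univ.sup' Finset.univ_nonempty
        (fun a => ∑ b, ∑ y, c a b x y * (Real.sqrt (μ ^ 2 + 4 * ε b y * (1 + μ)) - μ)) := by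
    classical
  have h1μ : 0 ≤ 1 + μ := by linarith
  set t : β → Y → ℝ := fun b y => (Real.sqrt (μ ^ 2 + 4 * ε b y * (1 + μ)) - μ) / 2 with htdef
  set P : Y → β → Matrix (Fin dB) (Fin dB) ℂ :=
    fun y b => vecMulVec (ψ y b) (star (ψ y b)) with hPdef
  set w : X → α → ℝ :=
    fun x a => (((A x a ⊗ₖ (1 : Matrix (Fin dB) (Fin dB) ℂ)) * ρ).trace).re with hwdef
  have hw0 : ∀ x a, 0 ≤ w x a := fun x a =>
    CSB.trace_mul_psd_re_nonneg (CSB.PosSemidef.kron (hApos x a) Matrix.PosSemidef.one) hρ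
  have hwsum : ∀ x, ∑ a, w x a = 1 := by
    intro x
    have e1 : ∑ a, (A x a ⊗ₖ (1 : Matrix (Fin dB) (Fin dB) ℂ))
        = (1 : Matrix (Fin dA × Fin dB) (Fin dA × Fin dB) ℂ) := by
      have e0 : ∑ a, (A x a ⊗ₖ (1 : Matrix (Fin dB) (Fin dB) ℂ))
          = (∑ a, A x a) ⊗ₖ (1 : Matrix (Fin dB) (Fin dB) ℂ) := by
        ext ⟨i1, i2⟩ ⟨j1, j2⟩
        simp [Matrix.sum_apply, Matrix.kroneckerMap_apply, Finset.sum_mul]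
      rw [e0, hAsum x, Matrix.one_kronecker_one]
    calc ∑ a, w x a = (∑ a, ((A x a ⊗ₖ (1 : Matrix (Fin dB) (Fin dB) ℂ)) * ρ).trace).re := by
          rw [Complex.re_sum]
      _ = (((∑ a, (A x a ⊗ₖ (1 : Matrix (Fin dB) (Fin dB) ℂ))) * ρ).trace).re := by
          rw [← Matrix.trace_sum, ← Finset.sum_mul]
      _ = 1 := by rw [e1, Matrix.one_mul, hρtr]; simp
  -- pointwise key bound
  have key : ∀ x a y b, (((A x a ⊗ₖ B y b) * ρ).trace).re ≤
      (1 + μ) * (((A x a ⊗ₖ P y b) * ρ).trace).re + t b y * w x a := by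
    intro x a y b
    have hM := CSB.op_bound (hψ y b) (hBpos y b) (hBtr y b) (hε b y) hμ (hfid y b)
    set M : Matrix (Fin dB) (Fin dB) ℂ :=
      ((1 + μ : ℝ) : ℂ) • P y b
        + (((Real.sqrt (μ ^ 2 + 4 * ε b y * (1 + μ)) - μ) / 2 : ℝ) : ℂ)
          • (1 : Matrix (Fin dB) (Fin dB) ℂ) - B y b with hMdef
    have hMB : M + B y b = ((1 + μ : ℝ) : ℂ) • P y b
        + ((t b y : ℝ) : ℂ) • (1 : Matrix (Fin dB) (Fin dB) ℂ) := by
      rw [hMdef, sub_add_cancel, htdef]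
    have hkron : A x a ⊗ₖ M + A x a ⊗ₖ B y b
        = ((1 + μ : ℝ) : ℂ) • (A x a ⊗ₖ P y b)
          + ((t b y : ℝ) : ℂ) • (A x a ⊗ₖ (1 : Matrix (Fin dB) (Fin dB) ℂ)) := by
      rw [← Matrix.kronecker_add, hMB, Matrix.kronecker_add, Matrix.kronecker_smul,
        Matrix.kronecker_smul]
    have h0 : 0 ≤ (((A x a ⊗ₖ M) * ρ).trace).re :=
      CSB.trace_mul_psd_re_nonneg (CSB.PosSemidef.kron (hApos x a) hM) hρ
    have htr2 : (((A x a ⊗ₖ M) * ρ).trace).re + (((A x a ⊗ₖ B y b) * ρ).trace).re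
        = (1 + μ) * (((A x a ⊗ₖ P y b) * ρ).trace).re + t b y * w x a := by
      have e := congrArg (fun N : Matrix (Fin dA × Fin dB) (Fin dA × Fin dB) ℂ =>
        ((N * ρ).trace).re) hkron
      simpa only [Matrix.add_mul, Matrix.smul_mul, Matrix.trace_add, Matrix.trace_smul,
        Complex.add_re, smul_eq_mul, Complex.re_ofReal_mul, hwdef] using e
    linarith
  -- sum it all
  have step1 : ∑ a, ∑ b, ∑ x, ∑ y, c a b x y * (((A x a ⊗ₖ B y b) * ρ).trace).re ≤
      ∑ a, ∑ b, ∑ x, ∑ y, c a b x y *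
        ((1 + μ) * (((A x a ⊗ₖ P y b) * ρ).trace).re + t b y * w x a) := by
    refine Finset.sum_le_sum fun a _ => Finset.sum_le_sum fun b _ =>
      Finset.sum_le_sum fun x _ => Finset.sum_le_sum fun y _ => ?_
    exact mul_le_mul_of_nonneg_left (key x a y b) (hc a b x y)
  have hsplit : ∑ a, ∑ b, ∑ x, ∑ y, c a b x y *
        ((1 + μ) * (((A x a ⊗ₖ P y b) * ρ).trace).re + t b y * w x a)
      = (1 + μ) * (∑ a, ∑ b, ∑ x, ∑ y, c a b x y * (((A x a ⊗ₖ P y b) * ρ).trace).re)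
        + ∑ a, ∑ b, ∑ x, ∑ y, c a b x y * t b y * w x a := by
    simp only [Finset.mul_sum, ← Finset.sum_add_distrib]
    refine Finset.sum_congr rfl fun a _ => Finset.sum_congr rfl fun b _ =>
      Finset.sum_congr rfl fun x _ => Finset.sum_congr rfl fun y _ => ?_
    ring
  set g : X → α → ℝ := fun x a => ∑ b, ∑ y, c a b x y * t b y with hgdef
  have hreorder : ∑ a, ∑ b, ∑ x, ∑ y, c a b x y * t b y * w x a
      = ∑ x, ∑ a, w x a * g x a := by
    have e1 : ∑ a, ∑ b, ∑ x, ∑ y, c a b x y * t b y * w x a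
        = ∑ a, ∑ x, ∑ b, ∑ y, c a b x y * t b y * w x a :=
      Finset.sum_congr rfl fun a _ => Finset.sum_comm
    have e2 : ∑ a, ∑ x, ∑ b, ∑ y, c a b x y * t b y * w x a
        = ∑ x, ∑ a, ∑ b, ∑ y, c a b x y * t b y * w x a := Finset.sum_comm
    rw [e1, e2]
    refine Finset.sum_congr rfl fun x _ => Finset.sum_congr rfl fun a _ => ?_
    rw [hgdef, Finset.mul_sum]
    refine Finset.sum_congr rfl fun b _ => ?_
    rw [Finset.mul_sum]
    refine Finset.sum_congr rfl fun y _ => ?_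
    ring
  have hgsup : ∀ x a, g x a ≤ (1 / 2) * Finset.univ.sup' Finset.univ_nonempty
      (fun a => ∑ b, ∑ y, c a b x y * (Real.sqrt (μ ^ 2 + 4 * ε b y * (1 + μ)) - μ)) := by
    intro x a
    have e : ∑ b, ∑ y, c a b x y * (Real.sqrt (μ ^ 2 + 4 * ε b y * (1 + μ)) - μ)
        = 2 * g x a := by
      rw [hgdef, Finset.mul_sum]
      refine Finset.sum_congr rfl fun b _ => ?_
      rw [Finset.mul_sum]
      refine Finset.sum_congr rfl fun y _ => ?_
      rw [htdef]
      ring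
    have hle : ∑ b, ∑ y, c a b x y * (Real.sqrt (μ ^ 2 + 4 * ε b y * (1 + μ)) - μ)
        ≤ Finset.univ.sup' Finset.univ_nonempty
          (fun a => ∑ b, ∑ y, c a b x y * (Real.sqrt (μ ^ 2 + 4 * ε b y * (1 + μ)) - μ)) :=
      Finset.le_sup' (f := fun a => ∑ b, ∑ y,
        c a b x y * (Real.sqrt (μ ^ 2 + 4 * ε b y * (1 + μ)) - μ)) (Finset.mem_univ a)
    rw [e] at hle
    linarith
  have hterm2 : ∑ x, ∑ a, w x a * g x a ≤ (1 / 2) * ∑ x, Finset.univ.sup' Finset.univ_nonempty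
      (fun a => ∑ b, ∑ y, c a b x y * (Real.sqrt (μ ^ 2 + 4 * ε b y * (1 + μ)) - μ)) := by
    rw [Finset.mul_sum]
    refine Finset.sum_le_sum fun x _ => ?_
    calc ∑ a, w x a * g x a
        ≤ ∑ a, w x a * ((1 / 2) * Finset.univ.sup' Finset.univ_nonempty
            (fun a => ∑ b, ∑ y, c a b x y * (Real.sqrt (μ ^ 2 + 4 * ε b y * (1 + μ)) - μ))) :=
          Finset.sum_le_sum fun a _ =>
            mul_le_mul_of_nonneg_left (hgsup x a) (hw0 x a)
      _ = (1 / 2) * Finset.univ.sup' Finset.univ_nonempty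
            (fun a => ∑ b, ∑ y, c a b x y * (Real.sqrt (μ ^ 2 + 4 * ε b y * (1 + μ)) - μ)) := by
          rw [← Finset.sum_mul, hwsum x, one_mul]
  have hterm1 : (1 + μ) * (∑ a, ∑ b, ∑ x, ∑ y, c a b x y *
      (((A x a ⊗ₖ P y b) * ρ).trace).re) ≤ (1 + μ) * β₀ :=
    mul_le_mul_of_nonneg_left (by rw [hPdef]; exact htarget) h1μ
  calc ∑ a, ∑ b, ∑ x, ∑ y, c a b x y * (((A x a ⊗ₖ B y b) * ρ).trace).re
      ≤ ∑ a, ∑ b, ∑ x, ∑ y, c a b x y *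
        ((1 + μ) * (((A x a ⊗ₖ P y b) * ρ).trace).re + t b y * w x a) := step1
    _ = (1 + μ) * (∑ a, ∑ b, ∑ x, ∑ y, c a b x y * (((A x a ⊗ₖ P y b) * ρ).trace).re)
        + ∑ a, ∑ b, ∑ x, ∑ y, c a b x y * t b y * w x a := hsplit
    _ ≤ (1 + μ) * β₀ + (1 / 2) * ∑ x, Finset.univ.sup' Finset.univ_nonempty
        (fun a => ∑ b, ∑ y, c a b x y * (Real.sqrt (μ ^ 2 + 4 * ε b y * (1 + μ)) - μ)) := by
      rw [hreorder]
      exact add_le_add hterm1 hterm2
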